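/- Every finite commutative ring is a quotient of a finite commutative symmetric algebra: for every finite commutative ring T of characteristic n, there exists a finite symmetric ℤ/n-algebra R and a surjective ring homomorphism R → T. -/

import Mathlib

open MulOpposite

section Sep
variable (n : ℕ) [NeZero n]

/-- The embedding `ZMod n →+ ℚ/ℤ`, `k ↦ k/n`. -/
noncomputable def zmodToQZ : ZMod n →+ AddCircle (1 : ℚ) :=
  ZMod.lift n ⟨CharacterModule.int.divByNat n, CharacterModule.int.divByNat_self n⟩

lemma zmodToQZ_intCast (z : ℤ) :
    zmodToQZ n (z : ZMod n) = ((z * (n : ℚ)⁻¹ : ℚ) : AddCircle (1 : ℚ)) := by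
  rw [zmodToQZ, ZMod.lift_coe]
  show (LinearMap.toSpanSingleton ℤ _ _) z = _
  rw [LinearMap.toSpanSingleton_apply]
  push_cast [← QuotientAddGroup.mk_zsmul]
  norm_num

lemma zmodToQZ_injective : Function.Injective (zmodToQZ n) := by
  rw [injective_iff_map_eq_zero]
  intro k hk
  obtain ⟨z, rfl⟩ := ZMod.intCast_surjective k
  rw [zmodToQZ_intCast] at hk
  rw [AddCircle.coe_eq_zero_iff] at hk
  obtain ⟨m, hm⟩ := hk
  rw [ZMod.intCast_zmod_eq_zero_iff_dvd]
  refine ⟨m, ?_⟩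
  have hn : (n : ℚ) ≠ 0 := Nat.cast_ne_zero.mpr (NeZero.ne n)
  have := hm
  field_simp at this
  simp only [zsmul_eq_mul, mul_one] at this
  rw [mul_comm]
  exact_mod_cast this.symm

lemma zmodToQZ_surj_torsion (x : AddCircle (1 : ℚ)) (hx : n • x = 0) :
    ∃ k : ZMod n, zmodToQZ n k = x := by
  obtain ⟨q, rfl⟩ := QuotientAddGroup.mk_surjective x
  rw [← QuotientAddGroup.mk_nsmul, AddCircle.coe_eq_zero_iff] at hx
  obtain ⟨m, hm⟩ := hx
  refine ⟨(m : ZMod n), ?_⟩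
  rw [zmodToQZ_intCast]
  congr 1
  have hn : (n : ℚ) ≠ 0 := Nat.cast_ne_zero.mpr (NeZero.ne n)
  have hm' : (m : ℚ) = n * q := by
    have := hm
    rw [zsmul_eq_mul, nsmul_eq_mul, mul_one] at this
    exact this
  field_simp
  linarith [hm']

variable (T : Type) [CommRing T] [Algebra (ZMod n) T] [CharP T n]

lemma exists_dual_ne_zero {a : T} (ha : a ≠ 0) :
    ∃ f : Module.Dual (ZMod n) T, f a ≠ 0 := by
  obtain ⟨c, hc⟩ := CharacterModule.exists_character_apply_ne_zero_of_ne_zero ha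
  have htor : ∀ x : T, n • (c x) = 0 := by
    intro x
    rw [← map_nsmul]
    have : (n : T) * x = 0 := by rw [CharP.cast_eq_zero T n, zero_mul]
    rw [nsmul_eq_mul, this, map_zero]
  have hsurj : ∀ x : T, ∃ k : ZMod n, zmodToQZ n k = c x :=
    fun x => zmodToQZ_surj_torsion n _ (htor x)
  choose F hF using hsurj
  have hinj := zmodToQZ_injective n
  have hFadd : ∀ x y : T, F (x + y) = F x + F y := by
    intro x y
    apply hinj
    rw [map_add, hF, hF, hF, map_add]
  have hFzero : F 0 = 0 := by
    apply hinj
    rw [hF, map_zero, map_zero]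
  refine ⟨⟨⟨F, hFadd⟩, ?_⟩, ?_⟩
  · intro z x
    show F (z • x) = z • F x
    have hz : ((z.val : ℕ) : ZMod n) = z := ZMod.natCast_rightInverse z
    have key : ∀ (M : Type) (_ : AddCommMonoid M) (_ : Module (ZMod n) M) (m : M),
        z • m = z.val • m := by
      intro M _ _ m
      nth_rewrite 1 [← hz]
      exact Nat.cast_smul_eq_nsmul _ _ _
    calc F (z • x) = F (z.val • x) := by rw [key]
    _ = z.val • F x := map_nsmul (⟨⟨F, hFzero⟩, hFadd⟩ : T →+ ZMod n) z.val x
    _ = z • F x := (key _ _ _ _).symm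
  · intro h
    apply hc
    rw [← hF, show F a = 0 from h, map_zero]
end Sep
section TrivExt

open MulOpposite TrivSqZeroExt

variable (n : ℕ) (T : Type) [CommRing T] [Algebra (ZMod n) T]

local notation "D" => Module.Dual (ZMod n) T

instance dualModule : Module T (Module.Dual (ZMod n) T) where
  smul t f := f.comp (LinearMap.mulLeft (ZMod n) t)
  one_smul f := by ext x; show f (1 * x) = f x; rw [one_mul]
  mul_smul s t f := by
    ext x
    show f (s * t * x) = f (t * (s * x))
    rw [mul_left_comm, mul_assoc]
  smul_zero t := by ext x; rfl
  smul_add t f g := by ext x; rfl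
  add_smul s t f := by
    ext x
    show f ((s + t) * x) = f (s * x) + f (t * x)
    rw [add_mul, map_add]
  zero_smul f := by
    ext x
    show f (0 * x) = 0
    rw [zero_mul, map_zero]

@[simp] lemma dual_smul_apply (t : T) (f : Module.Dual (ZMod n) T) (x : T) :
    (t • f) x = f (t * x) := rfl

instance dualModuleOp : Module Tᵐᵒᵖ (Module.Dual (ZMod n) T) :=
  Module.compHom _ ((RingHom.id T).fromOpposite mul_comm)

@[simp] lemma dual_op_smul_apply (t : Tᵐᵒᵖ) (f : Module.Dual (ZMod n) T) (x : T) :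
    (t • f) x = f (unop t * x) := rfl

instance : IsCentralScalar T (Module.Dual (ZMod n) T) where
  op_smul_eq_smul t f := rfl

instance : SMulCommClass T Tᵐᵒᵖ (Module.Dual (ZMod n) T) where
  smul_comm t s f := by
    ext x
    show f (unop s * (t * x)) = f (t * (unop s * x))
    rw [mul_left_comm]

instance : IsScalarTower (ZMod n) T (Module.Dual (ZMod n) T) where
  smul_assoc z t f := by
    ext x
    show f ((z • t) * x) = z • f (t * x)
    rw [smul_mul_assoc, map_smul]

instance : IsScalarTower (ZMod n) Tᵐᵒᵖ (Module.Dual (ZMod n) T) where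
  smul_assoc z t f := by
    ext x
    show f (unop (z • t) * x) = z • f (unop t * x)
    rw [unop_smul, smul_mul_assoc, map_smul]

end TrivExt

/-- Every finite commutative ring of characteristic `n` is a quotient of a finite
symmetric `ℤ/n`-algebra. -/
theorem stmt_14 (T : Type) [CommRing T] [Finite T] (n : ℕ) [CharP T n] :
    ∃ (R : Type) (_ : CommRing R) (_ : Finite R) (_ : Algebra (ZMod n) R),
      (∃ ψ : R →ₗ[ZMod n] ZMod n, ∀ I : Ideal R, (∀ a ∈ I, ψ a = 0) → I = ⊥) ∧
      ∃ Φ : R →+* T, Function.Surjective Φ := by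
  have hn : n ≠ 0 := CharP.char_ne_zero_of_finite T n
  haveI : NeZero n := ⟨hn⟩
  letI : Algebra (ZMod n) T := ZMod.algebra T n
  set M := Module.Dual (ZMod n) T with hM
  letI : Finite M :=
    Finite.of_injective (fun f => (f : T → ZMod n)) DFunLike.coe_injective
  set R := TrivSqZeroExt T M with hR
  refine ⟨R, inferInstance, inferInstanceAs (Finite (T × M)), inferInstance, ?_, ?_⟩
  · refine ⟨{ toFun := fun x => TrivSqZeroExt.snd x 1
              map_add' := by
                intro x y
                show TrivSqZeroExt.snd (x + y) 1 = _
                rw [TrivSqZeroExt.snd_add]; rfl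
              map_smul' := by
                intro z x
                show TrivSqZeroExt.snd (z • x) 1 = z • TrivSqZeroExt.snd x 1
                rw [TrivSqZeroExt.snd_smul]; rfl }, ?_⟩
    intro I hI
    rw [eq_bot_iff]
    intro x hx
    rw [Ideal.mem_bot]
    have hfst : TrivSqZeroExt.fst x = 0 := by
      by_contra h
      obtain ⟨g, hg⟩ := exists_dual_ne_zero n T h
      have hy : (TrivSqZeroExt.inr g : R) * x ∈ I := I.mul_mem_left _ hx
      have := hI _ hy
      simp only [LinearMap.coe_mk, AddHom.coe_mk] at this
      rw [TrivSqZeroExt.snd_mul, TrivSqZeroExt.fst_inr, TrivSqZeroExt.snd_inr] at this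
      rw [zero_smul, zero_add] at this
      rw [dual_op_smul_apply, MulOpposite.unop_op, mul_one] at this
      exact hg this
    have hsnd : TrivSqZeroExt.snd x = 0 := by
      ext b
      have hy : (TrivSqZeroExt.inl b : R) * x ∈ I := I.mul_mem_left _ hx
      have := hI _ hy
      simp only [LinearMap.coe_mk, AddHom.coe_mk] at this
      rw [TrivSqZeroExt.snd_mul, TrivSqZeroExt.fst_inl, TrivSqZeroExt.snd_inl] at this
      rw [smul_zero, add_zero] at this
      rw [dual_smul_apply, mul_one] at this
      simpa using this
    exact TrivSqZeroExt.ext hfst hsnd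
  · refine ⟨(TrivSqZeroExt.fstHom (ZMod n) T M).toRingHom, fun t => ⟨TrivSqZeroExt.inl t, ?_⟩⟩
    exact TrivSqZeroExt.fst_inl M t
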